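/- For the reduced Wolbachia system with ρ₁ = 0 and σ = 0, any solution with non-negative initial conditions (and F_w̄(t)+F_w(t) > 0, Q(0) < K) remains non-negative for all t ≥ 0. -/

import Mathlib

open Set Filter Topology

set_option maxHeartbeats 4000000

lemma firstCross {f : ℝ → ℝ} {T : ℝ} (hf : ContinuousOn f (Set.Icc 0 T))
    (h0 : 0 < f 0) (hbad : ∃ t ∈ Set.Icc 0 T, f t ≤ 0) :
    ∃ t0 ∈ Set.Icc 0 T, 0 < t0 ∧ f t0 = 0 ∧ ∀ s, 0 ≤ s → s < t0 → 0 < f s := by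
  obtain ⟨t1, ht1m, ht1le⟩ := hbad
  have hS : {t | t ∈ Set.Icc 0 T ∧ f t ≤ 0} = Set.Icc 0 T ∩ f ⁻¹' Set.Iic 0 := by
    ext x; simp [Set.mem_Iic]
  have hSc : IsClosed {t | t ∈ Set.Icc 0 T ∧ f t ≤ 0} := by
    rw [hS]; exact hf.preimage_isClosed_of_isClosed isClosed_Icc isClosed_Iic
  have hne : {t | t ∈ Set.Icc 0 T ∧ f t ≤ 0}.Nonempty := ⟨t1, ht1m, ht1le⟩
  have hbdd : BddBelow {t | t ∈ Set.Icc 0 T ∧ f t ≤ 0} := ⟨0, fun x hx => hx.1.1⟩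
  set t0 := sInf {t | t ∈ Set.Icc 0 T ∧ f t ≤ 0} with ht0def
  have ht0S : t0 ∈ {t | t ∈ Set.Icc 0 T ∧ f t ≤ 0} := hSc.csInf_mem hne hbdd
  have ht0pos : 0 < t0 := by
    rcases ht0S.1.1.lt_or_eq with h | h
    · exact h
    · exact absurd ht0S.2 (not_le.mpr (h ▸ h0))
  have hpos : ∀ s, 0 ≤ s → s < t0 → 0 < f s := by
    intro s hs hst
    by_contra h
    push_neg at h
    have hmem : s ∈ {t | t ∈ Set.Icc 0 T ∧ f t ≤ 0} := ⟨⟨hs, hst.le.trans ht0S.1.2⟩, h⟩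
    exact absurd (csInf_le hbdd hmem) (not_le.mpr hst)
  have hnb : (𝓝[Set.Ioo 0 t0] t0).NeBot := by
    rw [← mem_closure_iff_nhdsWithin_neBot, closure_Ioo ht0pos.ne]
    exact ⟨ht0pos.le, le_refl _⟩
  have hcl : Tendsto f (𝓝[Set.Ioo 0 t0] t0) (𝓝 (f t0)) :=
    (hf t0 ht0S.1).mono_left (nhdsWithin_mono _
      (fun x hx => ⟨hx.1.le, hx.2.le.trans ht0S.1.2⟩))
  have hge : 0 ≤ f t0 :=
    ge_of_tendsto hcl (eventually_mem_nhdsWithin.mono fun s hs => (hpos s hs.1.le hs.2).le)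
  exact ⟨t0, ht0S.1, ht0pos, le_antisymm ht0S.2 hge, hpos⟩

lemma derivCross {f : ℝ → ℝ} {t0 d : ℝ} (ht0 : 0 < t0) (hd : HasDerivAt f d t0)
    (hf0 : f t0 = 0) (hpos : ∀ s, 0 < s → s < t0 → 0 < f s) : d ≤ 0 := by
  have h1 : Tendsto (slope f t0) (𝓝[<] t0) (𝓝 d) := by
    have h2 := (hd.hasDerivWithinAt (s := Set.Iio t0))
    rw [hasDerivWithinAt_iff_tendsto_slope] at h2
    simpa [Set.diff_singleton_eq_self (by simp : t0 ∉ Set.Iio t0)] using h2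
  refine le_of_tendsto h1 ?_
  filter_upwards [Ioo_mem_nhdsLT_of_mem (⟨ht0, le_refl _⟩ : t0 ∈ Set.Ioc 0 t0)] with s hs
  have h2 : 0 < f s := hpos s hs.1 hs.2
  rw [slope_def_field, hf0]
  simp only [sub_zero]
  exact div_nonpos_of_nonneg_of_nonpos h2.le (by linarith [hs.2])

theorem stmt_10 (φwb φw ψ μa μwb μw ρ2 K : ℝ)
    (hφwb : 0 < φwb) (hφw : 0 < φw) (hψ : 0 < ψ) (hμa : 0 < μa)
    (hμwb : 0 < μwb) (hμw : 0 < μw) (hK : 0 < K)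
    (hρ2 : ρ2 ∈ Set.Icc (0:ℝ) 1)
    (Qwb Qw Fwb Fw : ℝ → ℝ)
    (hQwb : ∀ t ≥ (0:ℝ), HasDerivAt Qwb
      (((φwb * (Fwb t) ^ 2 + ρ2 * φw * Fw t * Fwb t) / (Fwb t + Fw t))
        * (1 - (Qwb t + Qw t) / K) - (μa + ψ) * Qwb t) t)
    (hQw : ∀ t ≥ (0:ℝ), HasDerivAt Qw
      (((φw * (Fw t) ^ 2 + (1 - ρ2) * φw * Fw t * Fwb t) / (Fwb t + Fw t))
        * (1 - (Qwb t + Qw t) / K) - (μa + ψ) * Qw t) t)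
    (hFwb : ∀ t ≥ (0:ℝ), HasDerivAt Fwb ((ψ / 2) * Qwb t - μwb * Fwb t) t)
    (hFw : ∀ t ≥ (0:ℝ), HasDerivAt Fw ((ψ / 2) * Qw t - μw * Fw t) t)
    (hFpos : ∀ t ≥ (0:ℝ), 0 < Fwb t + Fw t)
    (hQ0 : Qwb 0 + Qw 0 < K)
    (h0 : 0 ≤ Qwb 0 ∧ 0 ≤ Qw 0 ∧ 0 ≤ Fwb 0 ∧ 0 ≤ Fw 0) :
    ∀ t ≥ (0:ℝ), 0 ≤ Qwb t ∧ 0 ≤ Qw t ∧ 0 ≤ Fwb t ∧ 0 ≤ Fw t := by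
  obtain ⟨hρ0, hρ1⟩ := hρ2
  obtain ⟨hQwb0, hQw0, hFwb0, hFw0⟩ := h0
  intro T hT
  have cQwb : ContinuousOn Qwb (Set.Icc 0 T) :=
    fun s hs => (hQwb s hs.1).continuousAt.continuousWithinAt
  have cQw : ContinuousOn Qw (Set.Icc 0 T) :=
    fun s hs => (hQw s hs.1).continuousAt.continuousWithinAt
  have cFwb : ContinuousOn Fwb (Set.Icc 0 T) :=
    fun s hs => (hFwb s hs.1).continuousAt.continuousWithinAt
  have cFw : ContinuousOn Fw (Set.Icc 0 T) :=
    fun s hs => (hFw s hs.1).continuousAt.continuousWithinAt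
  -- Step 1 : Q < K on [0,T]
  have hQK : ∀ s ∈ Set.Icc (0:ℝ) T, Qwb s + Qw s < K := by
    by_contra hcon
    push_neg at hcon
    obtain ⟨t1, ht1, hK1⟩ := hcon
    obtain ⟨t0, ht0m, ht0pos, hf0, hfpos⟩ :=
      firstCross (f := fun s => K - (Qwb s + Qw s)) (T := T)
        (continuousOn_const.sub (cQwb.add cQw))
        (by simpa using hQ0) ⟨t1, ht1, by simpa using hK1⟩
    have hKt : Qwb t0 + Qw t0 = K := by
      have := hf0; linarith
    have hz : 1 - (Qwb t0 + Qw t0) / K = 0 := by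
      rw [hKt]; field_simp; norm_num
    have hd : HasDerivAt (fun s => K - (Qwb s + Qw s))
        (-((((φwb * (Fwb t0) ^ 2 + ρ2 * φw * Fw t0 * Fwb t0) / (Fwb t0 + Fw t0))
          * (1 - (Qwb t0 + Qw t0) / K) - (μa + ψ) * Qwb t0) +
          (((φw * (Fw t0) ^ 2 + (1 - ρ2) * φw * Fw t0 * Fwb t0) / (Fwb t0 + Fw t0))
          * (1 - (Qwb t0 + Qw t0) / K) - (μa + ψ) * Qw t0))) t0 :=
      ((hQwb t0 ht0m.1).add (hQw t0 ht0m.1)).const_sub K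
    have hle := derivCross ht0pos hd hf0 (fun s hs hst => hfpos s hs.le hst)
    rw [hz] at hle
    have hpos' : 0 < (μa + ψ) * K := mul_pos (by linarith) hK
    nlinarith [hle, hKt]
  -- bounds on the compact interval
  have hne : (Set.Icc (0:ℝ) T).Nonempty := Set.nonempty_Icc.mpr hT
  obtain ⟨C1, hC1⟩ := isCompact_Icc.exists_bound_of_continuousOn cFwb
  obtain ⟨C2, hC2⟩ := isCompact_Icc.exists_bound_of_continuousOn cFw
  set C := max C1 C2 with hCdef
  have hC0 : 0 ≤ C :=
    le_trans (norm_nonneg (Fwb 0)) (le_trans (hC1 0 ⟨le_refl 0, hT⟩) (le_max_left _ _))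
  have hCb : ∀ s ∈ Set.Icc (0:ℝ) T, |Fwb s| ≤ C ∧ |Fw s| ≤ C := by
    intro s hs
    exact ⟨le_trans (by simpa using hC1 s hs) (le_max_left _ _),
      le_trans (by simpa using hC2 s hs) (le_max_right _ _)⟩
  obtain ⟨tm, htm, htmmin⟩ := isCompact_Icc.exists_isMinOn hne (cFwb.add cFw)
  set m := Fwb tm + Fw tm with hmdef
  have hm0 : 0 < m := hFpos tm htm.1
  have hmle : ∀ s ∈ Set.Icc (0:ℝ) T, m ≤ Fwb s + Fw s := by
    intro s hs; exact htmmin hs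
  obtain ⟨M, hM⟩ := isCompact_Icc.exists_bound_of_continuousOn
    (continuousOn_const.sub ((cQwb.add cQw).div_const K))
  have hM0 : 0 ≤ M := le_trans (norm_nonneg _) (hM 0 ⟨le_refl 0, hT⟩)
  have hMb : ∀ s ∈ Set.Icc (0:ℝ) T, 1 - (Qwb s + Qw s) / K ≤ M := by
    intro s hs
    have := hM s hs
    rw [Real.norm_eq_abs] at this
    exact le_trans (le_abs_self _) this
  set L := φw * C * M / m + ψ + 1 with hLdef
  have hq0 : 0 ≤ φw * C * M / m := div_nonneg (by positivity) hm0.le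
  -- key barrier claim
  have key : ∀ ε > (0:ℝ), ∀ s ∈ Set.Icc (0:ℝ) T,
      0 < min (min (Qwb s) (Qw s)) (min (Fwb s) (Fw s)) + ε * Real.exp (L * s) := by
    intro ε hε
    by_contra hcon
    push_neg at hcon
    obtain ⟨t1, ht1, hbad1⟩ := hcon
    set u : ℝ → ℝ :=
      fun s => min (min (Qwb s) (Qw s)) (min (Fwb s) (Fw s)) + ε * Real.exp (L * s) with hu
    have hmin4 : ContinuousOn (fun s => min (min (Qwb s) (Qw s)) (min (Fwb s) (Fw s)))
        (Set.Icc 0 T) := fun x hx =>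
      Filter.Tendsto.min (Filter.Tendsto.min (cQwb x hx) (cQw x hx))
        (Filter.Tendsto.min (cFwb x hx) (cFw x hx))
    have hucont : ContinuousOn u (Set.Icc 0 T) :=
      hmin4.add (Continuous.continuousOn (by fun_prop))
    have hu0 : 0 < u 0 := by
      have h2 : 0 ≤ min (min (Qwb 0) (Qw 0)) (min (Fwb 0) (Fw 0)) :=
        le_min (le_min hQwb0 hQw0) (le_min hFwb0 hFw0)
      have h3 : 0 < ε * Real.exp (L * 0) := mul_pos hε (Real.exp_pos _)
      simp only [hu]; linarith
    obtain ⟨t0, ht0m, ht0pos, huf0, hupos⟩ := firstCross hucont hu0 ⟨t1, ht1, hbad1⟩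
    set e := ε * Real.exp (L * t0) with he
    have he0 : 0 < e := mul_pos hε (Real.exp_pos _)
    have hmin : min (min (Qwb t0) (Qw t0)) (min (Fwb t0) (Fw t0)) = -e := by
      have h1 := huf0
      simp only [hu] at h1
      linarith
    have hQwbe : -e ≤ Qwb t0 := by
      have h1 : min (min (Qwb t0) (Qw t0)) (min (Fwb t0) (Fw t0)) ≤ Qwb t0 :=
        le_trans (min_le_left _ _) (min_le_left _ _)
      rw [hmin] at h1; exact h1
    have hQwe : -e ≤ Qw t0 := by
      have h1 : min (min (Qwb t0) (Qw t0)) (min (Fwb t0) (Fw t0)) ≤ Qw t0 :=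
        le_trans (min_le_left _ _) (min_le_right _ _)
      rw [hmin] at h1; exact h1
    have hFwbe : -e ≤ Fwb t0 := by
      have h1 : min (min (Qwb t0) (Qw t0)) (min (Fwb t0) (Fw t0)) ≤ Fwb t0 :=
        le_trans (min_le_right _ _) (min_le_left _ _)
      rw [hmin] at h1; exact h1
    have hFwe : -e ≤ Fw t0 := by
      have h1 : min (min (Qwb t0) (Qw t0)) (min (Fwb t0) (Fw t0)) ≤ Fw t0 :=
        le_trans (min_le_right _ _) (min_le_right _ _)
      rw [hmin] at h1; exact h1
    have hFwbC : |Fwb t0| ≤ C := (hCb t0 ht0m).1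
    have hFwC : |Fw t0| ≤ C := (hCb t0 ht0m).2
    have hD0 : 0 < Fwb t0 + Fw t0 := lt_of_lt_of_le hm0 (hmle t0 ht0m)
    have hPpos : 0 < 1 - (Qwb t0 + Qw t0) / K := by
      have := hQK t0 ht0m
      rw [sub_pos]
      exact (div_lt_one hK).mpr this
    have hPM : 1 - (Qwb t0 + Qw t0) / K ≤ M := hMb t0 ht0m
    -- derivative bound for the offending component
    have main : ∀ (X : ℝ → ℝ) (dX : ℝ), HasDerivAt X dX t0 → X t0 = -e →
        (∀ s, 0 ≤ s → s < t0 → 0 < X s + ε * Real.exp (L * s)) → dX ≤ -(L * e) := by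
      intro X dX hX hXt0 hXlow
      have h1 : HasDerivAt (fun s : ℝ => L * s) L t0 := by
        simpa using (hasDerivAt_id t0).const_mul L
      have hE : HasDerivAt (fun s => ε * Real.exp (L * s))
          (ε * (Real.exp (L * t0) * L)) t0 :=
        ((Real.hasDerivAt_exp (L * t0)).comp t0 h1).const_mul ε
      have hv : HasDerivAt (fun s => X s + ε * Real.exp (L * s))
          (dX + ε * (Real.exp (L * t0) * L)) t0 := hX.add hE
      have hv0 : X t0 + ε * Real.exp (L * t0) = 0 := by rw [hXt0, ← he]; ring
      have hle := derivCross ht0pos hv hv0 (fun s hs hst => hXlow s hs.le hst)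
      have heq : ε * (Real.exp (L * t0) * L) = L * e := by rw [he]; ring
      linarith
    -- product lower bound
    have hab : -(C * e) ≤ Fw t0 * Fwb t0 := by
      rcases le_total 0 (Fwb t0) with h | h
      · nlinarith [mul_le_mul_of_nonneg_right hFwe h,
          mul_nonneg he0.le (sub_nonneg.mpr (abs_le.mp hFwbC).2)]
      · nlinarith [mul_le_mul_of_nonpos_right (abs_le.mp hFwC).2 h,
          mul_le_mul_of_nonneg_left hFwbe hC0]
    -- case analysis on which component attains the minimum
    rcases le_total (min (Qwb t0) (Qw t0)) (min (Fwb t0) (Fw t0)) with hc | hc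
    · rcases le_total (Qwb t0) (Qw t0) with hd | hd
      · -- Qwb is the offending component
        have hXeq : Qwb t0 = -e := by rw [min_eq_left hc, min_eq_left hd] at hmin; exact hmin
        have hlow : ∀ s, 0 ≤ s → s < t0 → 0 < Qwb s + ε * Real.exp (L * s) := by
          intro s hs hst
          have h1 := hupos s hs hst
          simp only [hu] at h1
          have h2 : min (min (Qwb s) (Qw s)) (min (Fwb s) (Fw s)) ≤ Qwb s :=
            le_trans (min_le_left _ _) (min_le_left _ _)
          linarith
        have hdle := main Qwb _ (hQwb t0 ht0m.1) hXeq hlow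
        -- numerator bound
        have hN : -(φw * C * e) ≤ φwb * Fwb t0 ^ 2 + ρ2 * φw * Fw t0 * Fwb t0 := by
          have hsq : 0 ≤ φwb * Fwb t0 ^ 2 := by positivity
          rcases le_total 0 (Fw t0 * Fwb t0) with h | h
          · nlinarith [mul_nonneg (mul_nonneg hρ0 hφw.le) h,
              mul_nonneg (mul_nonneg hφw.le hC0) he0.le]
          · nlinarith [mul_le_mul_of_nonneg_left hab hφw.le,
              mul_nonneg (mul_nonneg (sub_nonneg.mpr hρ1) hφw.le) (neg_nonneg.mpr h)]
        have hND : -(φw * C * e / m) ≤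
            (φwb * Fwb t0 ^ 2 + ρ2 * φw * Fw t0 * Fwb t0) / (Fwb t0 + Fw t0) := by
          set N := φwb * Fwb t0 ^ 2 + ρ2 * φw * Fw t0 * Fwb t0 with hNdef
          rcases le_total 0 N with h | h
          · have h1 : 0 ≤ N / (Fwb t0 + Fw t0) := div_nonneg h hD0.le
            have h2 : 0 ≤ φw * C * e / m := div_nonneg (by positivity) hm0.le
            linarith
          · have h1 : N / m ≤ N / (Fwb t0 + Fw t0) := by
              rw [div_le_div_iff₀ hm0 hD0]
              exact mul_le_mul_of_nonpos_left (hmle t0 ht0m) h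
            have h2 : -(φw * C * e) / m ≤ N / m := by
              exact (div_le_div_iff_of_pos_right hm0).mpr hN
            calc -(φw * C * e / m) = -(φw * C * e) / m := by ring
              _ ≤ N / m := h2
              _ ≤ N / (Fwb t0 + Fw t0) := h1
        have h3 : -(φw * C * e / m) * M ≤
            (φwb * Fwb t0 ^ 2 + ρ2 * φw * Fw t0 * Fwb t0) / (Fwb t0 + Fw t0)
              * (1 - (Qwb t0 + Qw t0) / K) := by
          calc -(φw * C * e / m) * M ≤ -(φw * C * e / m) * (1 - (Qwb t0 + Qw t0) / K) := by
                apply mul_le_mul_of_nonpos_left hPM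
                have : 0 ≤ φw * C * e / m := div_nonneg (by positivity) hm0.le
                linarith
            _ ≤ _ := mul_le_mul_of_nonneg_right hND hPpos.le
        have h4 : (φw * C * e / m) * M = (φw * C * M / m) * e := by ring
        have h6 : (μa + ψ) * Qwb t0 = -((μa + ψ) * e) := by rw [hXeq]; ring
        rw [hLdef] at hdle
        linarith [hdle, h3, h4, h6, mul_pos hμa he0, mul_pos hψ he0, he0]
      · -- Qw is the offending component
        have hXeq : Qw t0 = -e := by rw [min_eq_left hc, min_eq_right hd] at hmin; exact hmin
        have hlow : ∀ s, 0 ≤ s → s < t0 → 0 < Qw s + ε * Real.exp (L * s) := by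
          intro s hs hst
          have h1 := hupos s hs hst
          simp only [hu] at h1
          have h2 : min (min (Qwb s) (Qw s)) (min (Fwb s) (Fw s)) ≤ Qw s :=
            le_trans (min_le_left _ _) (min_le_right _ _)
          linarith
        have hdle := main Qw _ (hQw t0 ht0m.1) hXeq hlow
        have hN : -(φw * C * e) ≤ φw * Fw t0 ^ 2 + (1 - ρ2) * φw * Fw t0 * Fwb t0 := by
          have hsq : 0 ≤ φw * Fw t0 ^ 2 := by positivity
          rcases le_total 0 (Fw t0 * Fwb t0) with h | h
          · nlinarith [mul_nonneg (mul_nonneg (sub_nonneg.mpr hρ1) hφw.le) h,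
              mul_nonneg (mul_nonneg hφw.le hC0) he0.le]
          · nlinarith [mul_le_mul_of_nonneg_left hab hφw.le,
              mul_nonneg (mul_nonneg hρ0 hφw.le) (neg_nonneg.mpr h)]
        have hND : -(φw * C * e / m) ≤
            (φw * Fw t0 ^ 2 + (1 - ρ2) * φw * Fw t0 * Fwb t0) / (Fwb t0 + Fw t0) := by
          set N := φw * Fw t0 ^ 2 + (1 - ρ2) * φw * Fw t0 * Fwb t0 with hNdef
          rcases le_total 0 N with h | h
          · have h1 : 0 ≤ N / (Fwb t0 + Fw t0) := div_nonneg h hD0.le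
            have h2 : 0 ≤ φw * C * e / m := div_nonneg (by positivity) hm0.le
            linarith
          · have h1 : N / m ≤ N / (Fwb t0 + Fw t0) := by
              rw [div_le_div_iff₀ hm0 hD0]
              exact mul_le_mul_of_nonpos_left (hmle t0 ht0m) h
            have h2 : -(φw * C * e) / m ≤ N / m := by
              exact (div_le_div_iff_of_pos_right hm0).mpr hN
            calc -(φw * C * e / m) = -(φw * C * e) / m := by ring
              _ ≤ N / m := h2
              _ ≤ N / (Fwb t0 + Fw t0) := h1
        have h3 : -(φw * C * e / m) * M ≤
            (φw * Fw t0 ^ 2 + (1 - ρ2) * φw * Fw t0 * Fwb t0) / (Fwb t0 + Fw t0)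
              * (1 - (Qwb t0 + Qw t0) / K) := by
          calc -(φw * C * e / m) * M ≤ -(φw * C * e / m) * (1 - (Qwb t0 + Qw t0) / K) := by
                apply mul_le_mul_of_nonpos_left hPM
                have : 0 ≤ φw * C * e / m := div_nonneg (by positivity) hm0.le
                linarith
            _ ≤ _ := mul_le_mul_of_nonneg_right hND hPpos.le
        have h4 : (φw * C * e / m) * M = (φw * C * M / m) * e := by ring
        have h6 : (μa + ψ) * Qw t0 = -((μa + ψ) * e) := by rw [hXeq]; ring
        rw [hLdef] at hdle
        linarith [hdle, h3, h4, h6, mul_pos hμa he0, mul_pos hψ he0, he0]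
    · rcases le_total (Fwb t0) (Fw t0) with hd | hd
      · -- Fwb is the offending component
        have hXeq : Fwb t0 = -e := by rw [min_eq_right hc, min_eq_left hd] at hmin; exact hmin
        have hlow : ∀ s, 0 ≤ s → s < t0 → 0 < Fwb s + ε * Real.exp (L * s) := by
          intro s hs hst
          have h1 := hupos s hs hst
          simp only [hu] at h1
          have h2 : min (min (Qwb s) (Qw s)) (min (Fwb s) (Fw s)) ≤ Fwb s :=
            le_trans (min_le_right _ _) (min_le_left _ _)
          linarith
        have hdle := main Fwb _ (hFwb t0 ht0m.1) hXeq hlow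
        rw [hLdef] at hdle
        have h1 : ψ / 2 * -e ≤ ψ / 2 * Qwb t0 :=
          mul_le_mul_of_nonneg_left hQwbe (by linarith)
        have h6 : μwb * Fwb t0 = -(μwb * e) := by rw [hXeq]; ring
        linarith [hdle, h1, h6, mul_pos hμwb he0, mul_pos hψ he0, he0,
          mul_nonneg hq0 he0.le]
      · -- Fw is the offending component
        have hXeq : Fw t0 = -e := by rw [min_eq_right hc, min_eq_right hd] at hmin; exact hmin
        have hlow : ∀ s, 0 ≤ s → s < t0 → 0 < Fw s + ε * Real.exp (L * s) := by
          intro s hs hst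
          have h1 := hupos s hs hst
          simp only [hu] at h1
          have h2 : min (min (Qwb s) (Qw s)) (min (Fwb s) (Fw s)) ≤ Fw s :=
            le_trans (min_le_right _ _) (min_le_right _ _)
          linarith
        have hdle := main Fw _ (hFw t0 ht0m.1) hXeq hlow
        rw [hLdef] at hdle
        have h1 : ψ / 2 * -e ≤ ψ / 2 * Qw t0 :=
          mul_le_mul_of_nonneg_left hQwe (by linarith)
        have h6 : μw * Fw t0 = -(μw * e) := by rw [hXeq]; ring
        linarith [hdle, h1, h6, mul_pos hμw he0, mul_pos hψ he0, he0,
          mul_nonneg hq0 he0.le]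
  -- conclude by letting ε → 0
  have hgen : ∀ x : ℝ, (∀ ε > (0:ℝ), -(ε * Real.exp (L * T)) < x) → 0 ≤ x := by
    intro x hx
    by_contra h
    push_neg at h
    have hε : 0 < -x / Real.exp (L * T) := div_pos (by linarith) (Real.exp_pos _)
    have h2 := hx _ hε
    rw [div_mul_cancel₀ _ (Real.exp_ne_zero _), neg_neg] at h2
    exact lt_irrefl _ h2
  have hcomp : ∀ ε > (0:ℝ),
      -(ε * Real.exp (L * T)) < Qwb T ∧ -(ε * Real.exp (L * T)) < Qw T ∧
      -(ε * Real.exp (L * T)) < Fwb T ∧ -(ε * Real.exp (L * T)) < Fw T := by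
    intro ε hε
    have h1 := key ε hε T ⟨hT, le_refl T⟩
    have h2a : min (min (Qwb T) (Qw T)) (min (Fwb T) (Fw T)) ≤ Qwb T :=
      le_trans (min_le_left _ _) (min_le_left _ _)
    have h2b : min (min (Qwb T) (Qw T)) (min (Fwb T) (Fw T)) ≤ Qw T :=
      le_trans (min_le_left _ _) (min_le_right _ _)
    have h2c : min (min (Qwb T) (Qw T)) (min (Fwb T) (Fw T)) ≤ Fwb T :=
      le_trans (min_le_right _ _) (min_le_left _ _)
    have h2d : min (min (Qwb T) (Qw T)) (min (Fwb T) (Fw T)) ≤ Fw T :=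
      le_trans (min_le_right _ _) (min_le_right _ _)
    exact ⟨by linarith, by linarith, by linarith, by linarith⟩
  exact ⟨hgen _ (fun ε hε => (hcomp ε hε).1), hgen _ (fun ε hε => (hcomp ε hε).2.1),
    hgen _ (fun ε hε => (hcomp ε hε).2.2.1), hgen _ (fun ε hε => (hcomp ε hε).2.2.2)⟩
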